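/- Correctness and noise growth of BFV homomorphic addition: let n ≥ 1, q > t ≥ 2, Δ = ⌊q/t⌋ and r_t(q) = q − t·Δ, and work in R = ℤ[x]/(xⁿ+1). Suppose that for i = 1, 2, the ciphertexts (uᵢ, vᵢ) satisfy uᵢ + vᵢ·s ≡ Δ·mᵢ + eᵢ' (mod q) with ‖mᵢ‖ ≤ t/2, and write m₁ + m₂ = [m₁+m₂]_t + t·r_t coefficientwise. Then r_t has integer coefficients with ‖r_t‖ ≤ 1, and (u₁+u₂) + (v₁+v₂)·s ≡ Δ·[m₁+m₂]_t + (e₁' + e₂' − r_t(q)·r_t) (mod q), with the new noise bounded by ‖e₁' + e₂' − r_t(q)·r_t‖ ≤ ‖e₁'‖ + ‖e₂'‖ + t; i.e. homomorphic addition increases the noise by at most an additive factor of t. -/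

import Mathlib

open Polynomial

/-- The sup-norm (maximum absolute value of the coefficients of index `< n`) of an
integer polynomial, as a real number. -/
noncomputable def pnormZ (n : ℕ) (f : Polynomial ℤ) : ℝ :=
  ⨆ i : Fin n, |((f.coeff (i : ℕ) : ℤ) : ℝ)|

/-- Coefficientwise symmetric reduction modulo `t`: every coefficient is replaced by
its representative in the symmetric interval `[-t/2, t/2)`.  This is `[f]_t`. -/
noncomputable def symRed (t : ℕ) (f : Polynomial ℤ) : Polynomial ℤ :=
  f.sum fun i a => Polynomial.C (Int.bmod a t) * Polynomial.X ^ i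

lemma symRed_coeff (t : ℕ) (f : Polynomial ℤ) (k : ℕ) :
    (symRed t f).coeff k = Int.bmod (f.coeff k) t := by
  classical
  rw [symRed, Polynomial.sum, Polynomial.finset_sum_coeff]
  simp only [Polynomial.coeff_C_mul, Polynomial.coeff_X_pow, mul_ite, mul_one, mul_zero]
  rw [Finset.sum_ite_eq f.support k (fun i => Int.bmod (f.coeff i) t)]
  split
  · rfl
  · next h =>
      rw [Polynomial.notMem_support_iff.mp h]
      simp

lemma abs_add_sub' (x y z : ℝ) : |x + y - z| ≤ |x| + |y| + |z| := by
  calc |x + y - z| = |(x + y) + (-z)| := by ring_nf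
    _ ≤ |x + y| + |-z| := abs_add_le _ _
    _ ≤ |x| + |y| + |z| := by rw [abs_neg]; linarith [abs_add_le x y]

lemma le_pnormZ (n : ℕ) (f : Polynomial ℤ) (i : Fin n) :
    |((f.coeff (i : ℕ) : ℤ) : ℝ)| ≤ pnormZ n f :=
  le_ciSup (f := fun j : Fin n => |((f.coeff (j : ℕ) : ℤ) : ℝ)|)
    (Set.Finite.bddAbove (Set.finite_range _)) i

lemma pnormZ_le (n : ℕ) (hn : 1 ≤ n) (f : Polynomial ℤ) (B : ℝ)
    (h : ∀ i : Fin n, |((f.coeff (i : ℕ) : ℤ) : ℝ)| ≤ B) : pnormZ n f ≤ B := by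
  have : Nonempty (Fin n) := ⟨⟨0, hn⟩⟩
  exact ciSup_le h

/-- Correctness and noise growth of BFV homomorphic addition in `R = ℤ[x]/(xⁿ+1)`:
if `uᵢ + vᵢ·s ≡ Δ·mᵢ + eᵢ' (mod q)` with `‖mᵢ‖ ≤ t/2`, and
`m₁ + m₂ = [m₁+m₂]_t + t·r_t` coefficientwise, then `‖r_t‖ ≤ 1`,
`(u₁+u₂) + (v₁+v₂)·s ≡ Δ·[m₁+m₂]_t + (e₁' + e₂' - r_t(q)·r_t) (mod q)`, and
`‖e₁' + e₂' - r_t(q)·r_t‖ ≤ ‖e₁'‖ + ‖e₂'‖ + t`, where `Δ = ⌊q/t⌋` and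
`r_t(q) = q - t·Δ`.  Congruence modulo `q` in `R` is expressed through the quotient
map `φ : ℤ[x] → ℤ[x]/(xⁿ+1)` as divisibility by `(q : R)`. -/
theorem bfv_addition_correct (n : ℕ) (hn : 1 ≤ n) (q t : ℕ) (ht : 2 ≤ t) (htq : t < q)
    (Δ rtq : ℕ) (hΔ : Δ = q / t) (hrtq : rtq = q - t * Δ)
    (φ : Polynomial ℤ →+* AdjoinRoot ((X : Polynomial ℤ) ^ n + 1))
    (hφ : φ = AdjoinRoot.mk ((X : Polynomial ℤ) ^ n + 1))
    (s u₁ v₁ u₂ v₂ m₁ m₂ e₁' e₂' rt : Polynomial ℤ)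
    (hdm₁ : m₁.degree < (n : WithBot ℕ)) (hdm₂ : m₂.degree < (n : WithBot ℕ))
    (hnm₁ : pnormZ n m₁ ≤ (t : ℝ) / 2) (hnm₂ : pnormZ n m₂ ≤ (t : ℝ) / 2)
    (hdec₁ : (q : AdjoinRoot ((X : Polynomial ℤ) ^ n + 1)) ∣
      (φ u₁ + φ v₁ * φ s - ((Δ : AdjoinRoot ((X : Polynomial ℤ) ^ n + 1)) * φ m₁ + φ e₁')))
    (hdec₂ : (q : AdjoinRoot ((X : Polynomial ℤ) ^ n + 1)) ∣
      (φ u₂ + φ v₂ * φ s - ((Δ : AdjoinRoot ((X : Polynomial ℤ) ^ n + 1)) * φ m₂ + φ e₂')))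
    (hrt : m₁ + m₂ = symRed t (m₁ + m₂) + Polynomial.C (t : ℤ) * rt) :
    pnormZ n rt ≤ 1 ∧
    (q : AdjoinRoot ((X : Polynomial ℤ) ^ n + 1)) ∣
      (φ (u₁ + u₂) + φ (v₁ + v₂) * φ s
        - ((Δ : AdjoinRoot ((X : Polynomial ℤ) ^ n + 1)) * φ (symRed t (m₁ + m₂))
          + φ (e₁' + e₂' - Polynomial.C (rtq : ℤ) * rt))) ∧
    pnormZ n (e₁' + e₂' - Polynomial.C (rtq : ℤ) * rt)
      ≤ pnormZ n e₁' + pnormZ n e₂' + t := by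
  have ht0 : 0 < t := by omega
  -- the coefficientwise identity
  have hcoeff : ∀ k : ℕ, ((m₁ + m₂).coeff k) =
      Int.bmod ((m₁ + m₂).coeff k) t + (t : ℤ) * rt.coeff k := by
    intro k
    have h := congrArg (fun p => Polynomial.coeff p k) hrt
    simpa [symRed_coeff, Polynomial.coeff_add, Polynomial.coeff_C_mul] using h
  -- integer bound on each coefficient of rt
  have hrtbound : ∀ i : Fin n, |rt.coeff (i : ℕ)| ≤ 1 := by
    intro i
    have h1 : -(((t : ℤ)) / 2) ≤ Int.bmod ((m₁ + m₂).coeff (i : ℕ)) t := Int.le_bmod ht0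
    have h2 : Int.bmod ((m₁ + m₂).coeff (i : ℕ)) t < ((t : ℤ) + 1) / 2 := Int.bmod_lt ht0
    have h1' : -(t : ℤ) ≤ 2 * Int.bmod ((m₁ + m₂).coeff (i : ℕ)) t := by omega
    have h2' : 2 * Int.bmod ((m₁ + m₂).coeff (i : ℕ)) t ≤ (t : ℤ) + 1 := by omega
    have hm1 : 2 * |m₁.coeff (i : ℕ)| ≤ (t : ℤ) := by
      have hr := (le_pnormZ n m₁ i).trans hnm₁
      have hr2 : ((2 * |m₁.coeff (i : ℕ)| : ℤ) : ℝ) ≤ (t : ℤ) := by push_cast at hr ⊢; linarith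
      exact_mod_cast hr2
    have hm2 : 2 * |m₂.coeff (i : ℕ)| ≤ (t : ℤ) := by
      have hr := (le_pnormZ n m₂ i).trans hnm₂
      have hr2 : ((2 * |m₂.coeff (i : ℕ)| : ℤ) : ℝ) ≤ (t : ℤ) := by push_cast at hr ⊢; linarith
      exact_mod_cast hr2
    have hcadd : (m₁ + m₂).coeff (i : ℕ) = m₁.coeff (i : ℕ) + m₂.coeff (i : ℕ) :=
      Polynomial.coeff_add _ _ _
    have hceq := hcoeff (i : ℕ)
    have habs1 := abs_le.mp (le_of_eq (rfl : |m₁.coeff (i : ℕ)| = _))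
    have hb1 := neg_abs_le (m₁.coeff (i : ℕ))
    have hb1' := le_abs_self (m₁.coeff (i : ℕ))
    have hb2 := neg_abs_le (m₂.coeff (i : ℕ))
    have hb2' := le_abs_self (m₂.coeff (i : ℕ))
    refine abs_le.mpr ⟨?_, ?_⟩
    · by_contra hcon
      push_neg at hcon
      have hle : rt.coeff (i : ℕ) ≤ -2 := by omega
      have : (t : ℤ) * rt.coeff (i : ℕ) ≤ (t : ℤ) * (-2) :=
        mul_le_mul_of_nonneg_left hle (by positivity)
      linarith
    · by_contra hcon
      push_neg at hcon
      have hle : (2 : ℤ) ≤ rt.coeff (i : ℕ) := by omega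
      have : (t : ℤ) * 2 ≤ (t : ℤ) * rt.coeff (i : ℕ) :=
        mul_le_mul_of_nonneg_left hle (by positivity)
      linarith
  have part1 : pnormZ n rt ≤ 1 := by
    apply pnormZ_le n hn
    intro i
    have := hrtbound i
    exact_mod_cast this
  -- arithmetic on q, t, Δ, rtq
  have hle : t * Δ ≤ q := by rw [hΔ, mul_comm]; exact Nat.div_mul_le_self q t
  have hq : t * Δ + rtq = q := by rw [hrtq]; exact Nat.add_sub_cancel' hle
  have hrtqlt : rtq < t := by
    have hmod : q - t * (q / t) = q % t :=
      Nat.sub_eq_of_eq_add (by rw [Nat.mod_add_div q t])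
    rw [hrtq, hΔ, hmod]
    exact Nat.mod_lt q ht0
  set R := AdjoinRoot ((X : Polynomial ℤ) ^ n + 1)
  have hqR : ((q : ℕ) : R) = (t : R) * (Δ : R) + (rtq : R) := by
    rw [← hq]; push_cast; exact congrArg (· + (rtq : R)) (Nat.cast_mul (α := R) t Δ)
  have hCt : φ (Polynomial.C ((t : ℤ))) = (t : R) := by
    have hct : (Polynomial.C ((t : ℤ))) = ((t : ℕ) : Polynomial ℤ) := by simp
    rw [hct, map_natCast]
  have hCr : φ (Polynomial.C ((rtq : ℤ))) = (rtq : R) := by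
    have hct : (Polynomial.C ((rtq : ℤ))) = ((rtq : ℕ) : Polynomial ℤ) := by simp
    rw [hct, map_natCast]
  have hsym : φ m₁ + φ m₂ = φ (symRed t (m₁ + m₂)) + (t : R) * φ rt := by
    have h := congrArg φ hrt
    rw [map_add, map_add, map_mul, hCt] at h
    exact h
  have part2 : (q : R) ∣
      (φ (u₁ + u₂) + φ (v₁ + v₂) * φ s
        - ((Δ : R) * φ (symRed t (m₁ + m₂))
          + φ (e₁' + e₂' - Polynomial.C (rtq : ℤ) * rt))) := by
    have key : φ (u₁ + u₂) + φ (v₁ + v₂) * φ s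
        - ((Δ : R) * φ (symRed t (m₁ + m₂)) + φ (e₁' + e₂' - Polynomial.C (rtq : ℤ) * rt))
        = (φ u₁ + φ v₁ * φ s - ((Δ : R) * φ m₁ + φ e₁'))
          + (φ u₂ + φ v₂ * φ s - ((Δ : R) * φ m₂ + φ e₂')) + (q : R) * φ rt := by
      simp only [map_add, map_sub, map_mul, hCr]
      linear_combination (Δ : R) * hsym - (φ rt) * hqR
    rw [key]
    exact dvd_add (dvd_add hdec₁ hdec₂) (dvd_mul_right _ _)
  have part3 : pnormZ n (e₁' + e₂' - Polynomial.C (rtq : ℤ) * rt)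
      ≤ pnormZ n e₁' + pnormZ n e₂' + t := by
    apply pnormZ_le n hn
    intro i
    have h1 := le_pnormZ n e₁' i
    have h2 := le_pnormZ n e₂' i
    have h3 : |((rtq : ℕ) : ℝ) * ((rt.coeff (i : ℕ) : ℤ) : ℝ)| ≤ (t : ℝ) := by
      rw [abs_mul]
      have hb : |((rt.coeff (i : ℕ) : ℤ) : ℝ)| ≤ 1 := by exact_mod_cast hrtbound i
      have hq1 : |((rtq : ℕ) : ℝ)| = ((rtq : ℕ) : ℝ) := abs_of_nonneg (by positivity)
      rw [hq1]
      calc ((rtq : ℕ) : ℝ) * |((rt.coeff (i : ℕ) : ℤ) : ℝ)| ≤ (t : ℝ) * 1 := by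
            apply mul_le_mul _ hb (abs_nonneg _) (by positivity)
            exact_mod_cast hrtqlt.le
        _ = (t : ℝ) := mul_one _
    simp only [Polynomial.coeff_sub, Polynomial.coeff_add, Polynomial.coeff_C_mul]
    push_cast
    push_cast at h3
    refine le_trans (abs_add_sub' _ _ _) ?_
    linarith
  exact ⟨part1, part2, part3⟩
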